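/- Let Z be a complete metric space and f₁, ..., fₘ : Z → Z contractions with Lipschitz constants α₁, ..., αₘ such that α₁ + ... + αₘ < 1. Then the unique nonempty compact attractor X with ⋃ⱼ fⱼ(X) = X is totally disconnected. -/

import Mathlib

open Set Metric MeasureTheory ENNReal

/-- Iterated covers of the attractor with geometrically shrinking total diameter. -/
lemma stmt_10_cover {Z : Type*} [MetricSpace Z]
    (m : ℕ) (f : Fin m → Z → Z) (K : Fin m → NNReal)
    (hf : ∀ j, LipschitzWith (K j) (f j))
    (X : Set Z) (hattr : (⋃ j, f j '' X) = X) (n : ℕ) :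
    ∃ (ι : Type) (_ : Fintype ι) (V : ι → Set Z),
      X ⊆ ⋃ i, V i ∧
      ∑ i, EMetric.diam (V i) ≤ (∑ j, (K j : ℝ≥0∞)) ^ n * EMetric.diam X := by
  induction n with
  | zero => exact ⟨PUnit, inferInstance, fun _ => X, fun z hz => mem_iUnion.2 ⟨PUnit.unit, hz⟩, by simp⟩
  | succ n ih =>
    obtain ⟨ι, hι, V, hcov, hsum⟩ := ih
    refine ⟨Fin m × ι, inferInstance, fun p => f p.1 '' V p.2, ?_, ?_⟩
    · calc X = ⋃ j, f j '' X := hattr.symm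
        _ ⊆ ⋃ j, f j '' (⋃ i, V i) := iUnion_mono fun j => image_mono hcov
        _ ⊆ ⋃ p : Fin m × ι, f p.1 '' V p.2 := by
            simp only [image_iUnion, iUnion_subset_iff]
            intro j i z hz
            exact mem_iUnion.2 ⟨(j, i), hz⟩
    · calc ∑ p : Fin m × ι, EMetric.diam (f p.1 '' V p.2)
          ≤ ∑ p : Fin m × ι, (K p.1 : ℝ≥0∞) * EMetric.diam (V p.2) :=
            Finset.sum_le_sum fun p _ => (hf p.1).ediam_image_le _
        _ = (∑ j, (K j : ℝ≥0∞)) * ∑ i, EMetric.diam (V i) := by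
            rw [Fintype.sum_prod_type, Finset.sum_mul]
            exact Finset.sum_congr rfl fun j _ => by simp [Finset.mul_sum]
        _ ≤ (∑ j, (K j : ℝ≥0∞)) * ((∑ j, (K j : ℝ≥0∞)) ^ n * EMetric.diam X) :=
            mul_le_mul_right hsum _
        _ = (∑ j, (K j : ℝ≥0∞)) ^ (n + 1) * EMetric.diam X := by ring

/-- If the sum of the Lipschitz constants of the contractions of an IFS is
less than 1, the attractor is totally disconnected. -/
theorem stmt_10 {Z : Type*} [MetricSpace Z] [CompleteSpace Z] [Nonempty Z]
    (m : ℕ) (f : Fin m → Z → Z) (α : Fin m → ℝ)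
    (hα : ∀ j, 0 ≤ α j)
    (hcontr : ∀ j, ∀ z z', dist (f j z) (f j z') ≤ α j * dist z z')
    (hsum : (∑ j, α j) < 1)
    (X : Set Z) (hne : X.Nonempty) (hcomp : IsCompact X)
    (hattr : (⋃ j, f j '' X) = X) :
    IsTotallyDisconnected X := by
  set K : Fin m → NNReal := fun j => ⟨α j, hα j⟩ with hK
  have hf : ∀ j, LipschitzWith (K j) (f j) := fun j =>
    LipschitzWith.of_dist_le_mul fun z z' => hcontr j z z'
  set r : ℝ≥0∞ := ∑ j, (K j : ℝ≥0∞) with hr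
  have hrlt : r < 1 := by
    rw [hr, ← ENNReal.coe_finset_sum]
    rw [ENNReal.coe_lt_one_iff]
    rw [← NNReal.coe_lt_one]
    push_cast
    exact hsum
  have hDne : EMetric.diam X ≠ ⊤ := hcomp.isBounded.ediam_ne_top
  have htend : Filter.Tendsto (fun n : ℕ => r ^ n * EMetric.diam X)
      Filter.atTop (nhds 0) := by
    have h0 : Filter.Tendsto (fun n : ℕ => r ^ n) Filter.atTop (nhds 0) :=
      ENNReal.tendsto_pow_atTop_nhds_zero_of_lt_one hrlt
    have := ENNReal.Tendsto.mul_const h0 (Or.inr hDne)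
    simpa using this
  intro T hTX hTconn x hx y hy
  -- show `edist`/`dist x y = 0`
  have key : ∀ n : ℕ, ENNReal.ofReal (dist x y) ≤ r ^ n * EMetric.diam X := by
    intro n
    obtain ⟨ι, hι, V, hcov, hsumd⟩ := stmt_10_cover m f K hf X hattr n
    set g : Z → ℝ := fun z => dist x z with hg
    have hgl : LipschitzWith 1 g := LipschitzWith.dist_right x
    have hIcc : Set.Icc (0 : ℝ) (dist x y) ⊆ g '' T := by
      apply (hTconn.image g (hgl.continuous.continuousOn)).Icc_subset
      · exact ⟨x, hx, by simp [hg]⟩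
      · exact ⟨y, hy, rfl⟩
    have hsub : g '' T ⊆ ⋃ i, g '' V i := by
      rw [← image_iUnion]
      exact image_mono (hTX.trans hcov)
    calc ENNReal.ofReal (dist x y)
        = volume (Set.Icc (0 : ℝ) (dist x y)) := by rw [Real.volume_Icc, sub_zero]
      _ ≤ volume (⋃ i, g '' V i) := measure_mono (hIcc.trans hsub)
      _ ≤ ∑ i, volume (g '' V i) := measure_iUnion_fintype_le _ _
      _ ≤ ∑ i, EMetric.diam (V i) := by
          refine Finset.sum_le_sum fun i _ => ?_
          calc volume (g '' V i) ≤ EMetric.diam (g '' V i) := Real.volume_le_diam _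
            _ ≤ 1 * EMetric.diam (V i) := hgl.ediam_image_le _
            _ = EMetric.diam (V i) := one_mul _
      _ ≤ r ^ n * EMetric.diam X := hsumd
  have h0 : ENNReal.ofReal (dist x y) ≤ 0 := ge_of_tendsto' htend key
  have : dist x y ≤ 0 := by
    by_contra h
    push_neg at h
    exact absurd h0 (by simpa [ENNReal.ofReal_pos.2 h] using (ENNReal.ofReal_pos.2 h).ne')
  exact dist_le_zero.1 this
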